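/- Let B be a commutative k-domain, δ a nontrivial exponential map on B with iterative derivatives D_i (so δ(b) = Σ_i D_i(b) t^i), and let x ∈ B be a local slice of δ (an element of minimal positive δ-degree n). Then D_i(x) ∈ B^δ for all i > 0. -/

import Mathlib

open Polynomial

variable (k : Type) [Field k] (B : Type) [CommRing B] [IsDomain B] [Algebra k B]

/-- An exponential map on a `k`-domain `B`. -/
def IsExpMap (δ : B →ₐ[k] B[X]) : Prop :=
  (∀ b : B, (δ b).eval 0 = b) ∧
  (∀ b : B, (δ b).map δ.toRingHom = (δ b).eval₂ (C.comp C) (C X + X))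

/-- The trivial exponential map property. -/
def IsTrivialExp (δ : B →ₐ[k] B[X]) : Prop := ∀ b : B, δ b = C b

/-- The ring of δ-invariants, as a subalgebra. -/
noncomputable def expInv (δ : B →ₐ[k] B[X]) : Subalgebra k B :=
  AlgHom.equalizer δ CAlgHom

/-- A local slice: an element of minimal positive δ-degree. -/
def IsLocalSlice (δ : B →ₐ[k] B[X]) (x : B) : Prop :=
  0 < (δ x).degree ∧ ∀ y : B, 0 < (δ y).degree → (δ x).degree ≤ (δ y).degree

/-- A slice: a local slice whose top iterative derivative is a unit. -/
def IsSlice (δ : B →ₐ[k] B[X]) (x : B) : Prop :=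
  IsLocalSlice k B δ x ∧ IsUnit ((δ x).coeff (δ x).natDegree)

/-- δ admits a slice. -/
def HasSlice (δ : B →ₐ[k] B[X]) : Prop := ∃ x : B, IsSlice k B δ x

/-- Makar-Limanov invariant. -/
noncomputable def ML : Subalgebra k B :=
  ⨅ δ ∈ {δ : B →ₐ[k] B[X] | IsExpMap k B δ}, expInv k B δ

/-- Makar-Limanov–Freudenburg invariant. -/
noncomputable def MLstar : Subalgebra k B :=
  ⨅ δ ∈ {δ : B →ₐ[k] B[X] | IsExpMap k B δ ∧ HasSlice k B δ}, expInv k B δ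

/-- Rigidity: every exponential map is trivial. -/
def IsRigid : Prop := ∀ δ : B →ₐ[k] B[X], IsExpMap k B δ → IsTrivialExp k B δ

/-- `B` has transcendence degree `n` over `k`. -/
def HasTrdeg (n : ℕ) : Prop := ∃ x : Fin n → B, IsTranscendenceBasis k x


section AuxLemmas

variable {R : Type} [CommRing R] [IsDomain R]

lemma wb_le (w : WithBot ℕ) (i j : ℕ) (h : w + (i : WithBot ℕ) ≤ (j : WithBot ℕ)) :
    w ≤ ((j - i : ℕ) : WithBot ℕ) := by
  cases w with
  | bot => exact bot_le
  | coe d =>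
    simp only [Nat.cast_withBot, ← WithBot.coe_add, WithBot.coe_le_coe] at h ⊢
    omega

lemma aux_pow (j : ℕ) :
    ∀ i : ℕ, (((C (X : R[X]) + X) ^ j).coeff i).degree + (i : WithBot ℕ) ≤ (j : WithBot ℕ) := by
  induction j with
  | zero =>
    intro i
    cases i with
    | zero => simp
    | succ m => simp [coeff_one]
  | succ j ih =>
    intro i
    rw [pow_succ, mul_add, coeff_add]
    have hA : ((((C (X:R[X]) + X) ^ j) * C X).coeff i).degree + (i : WithBot ℕ)
        ≤ ((j + 1 : ℕ) : WithBot ℕ) := by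
      rw [coeff_mul_C]
      calc _
          ≤ ((((C (X:R[X]) + X) ^ j).coeff i).degree + 1) + (i : WithBot ℕ) :=
            add_le_add_left (le_trans (degree_mul_le _ _) (by rw [degree_X])) _
        _ = ((((C (X:R[X]) + X) ^ j).coeff i).degree + (i : WithBot ℕ)) + 1 := by
            rw [add_assoc, add_assoc, add_comm (1 : WithBot ℕ)]
        _ ≤ (j : WithBot ℕ) + 1 := add_le_add_left (ih i) _
        _ = ((j + 1 : ℕ) : WithBot ℕ) := by push_cast; ring
    have hB : ((((C (X:R[X]) + X) ^ j) * X).coeff i).degree + (i : WithBot ℕ)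
        ≤ ((j + 1 : ℕ) : WithBot ℕ) := by
      cases i with
      | zero => simp [mul_coeff_zero]
      | succ m =>
        rw [coeff_mul_X]
        calc (((C (X:R[X]) + X) ^ j).coeff m).degree + ((m + 1 : ℕ) : WithBot ℕ)
            = ((((C (X:R[X]) + X) ^ j).coeff m).degree + (m : WithBot ℕ)) + 1 := by
              push_cast; rw [add_assoc]
          _ ≤ (j : WithBot ℕ) + 1 := add_le_add_left (ih m) _
          _ = ((j + 1 : ℕ) : WithBot ℕ) := by push_cast; ring
    refine le_trans (add_le_add_left (degree_add_le _ _) _) ?_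
    rcases max_cases ((((C (X:R[X]) + X) ^ j) * C X).coeff i).degree
        ((((C (X:R[X]) + X) ^ j) * X).coeff i).degree with ⟨h, _⟩ | ⟨h, _⟩ <;>
      rw [h] <;> assumption

lemma coeff_eval2_degree_le (p : R[X]) (i : ℕ) :
    ((p.eval₂ ((C : R[X] →+* R[X][X]).comp (C : R →+* R[X])) (C X + X)).coeff i).degree
      ≤ ((p.natDegree - i : ℕ) : WithBot ℕ) := by
  rw [eval₂_eq_sum_range, finset_sum_coeff]
  refine le_trans (degree_sum_le _ _) (Finset.sup_le fun j hj => ?_)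
  have hj' : j ≤ p.natDegree := Nat.lt_succ_iff.mp (Finset.mem_range.mp hj)
  rw [RingHom.comp_apply, coeff_C_mul]
  refine le_trans (degree_mul_le _ _) ?_
  have h2 : (((C (X : R[X]) + X) ^ j).coeff i).degree ≤ ((p.natDegree - i : ℕ) : WithBot ℕ) :=
    wb_le _ i p.natDegree (le_trans (aux_pow j i) (by exact_mod_cast Nat.cast_le.mpr hj'))
  calc (C (p.coeff j) : R[X]).degree + (((C (X : R[X]) + X) ^ j).coeff i).degree
      ≤ 0 + ((p.natDegree - i : ℕ) : WithBot ℕ) := add_le_add degree_C_le h2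
    _ = _ := zero_add _

end AuxLemmas

theorem localSlice_derivatives_mem_invariants (δ : B →ₐ[k] B[X]) (hδ : IsExpMap k B δ)
    (hnt : ¬ IsTrivialExp k B δ) (x : B) (hx : IsLocalSlice k B δ x) :
    ∀ i : ℕ, 0 < i → (δ x).coeff i ∈ expInv k B δ := by
  intro i hi
  set p : B[X] := δ x with hp
  have hp0 : p ≠ 0 := by
    intro h
    have h1 := hx.1
    rw [← hp, h] at h1
    simp at h1
  have hn : 0 < p.natDegree := natDegree_pos_iff_degree_pos.mpr (hp ▸ hx.1)
  have key : δ (p.coeff i)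
      = (p.eval₂ ((C : B[X] →+* B[X][X]).comp (C : B →+* B[X])) (C X + X)).coeff i := by
    have h2 := hδ.2 x
    calc δ (p.coeff i) = (p.map δ.toRingHom).coeff i := (coeff_map _ _).symm
      _ = _ := by rw [← hp] at h2; rw [h2]
  have hdle : (δ (p.coeff i)).degree ≤ ((p.natDegree - i : ℕ) : WithBot ℕ) := by
    rw [key]; exact coeff_eval2_degree_le p i
  have hle0 : (δ (p.coeff i)).degree ≤ 0 := by
    by_contra h
    push_neg at h
    have hmin := hx.2 _ h
    rw [← hp] at hmin
    have h3 : (p.natDegree : WithBot ℕ) ≤ ((p.natDegree - i : ℕ) : WithBot ℕ) := by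
      refine le_trans ?_ hdle
      rw [degree_eq_natDegree hp0] at hmin
      exact hmin
    have h4 : p.natDegree ≤ p.natDegree - i := by exact_mod_cast h3
    omega
  have hC : δ (p.coeff i) = C ((δ (p.coeff i)).coeff 0) := eq_C_of_degree_le_zero hle0
  show p.coeff i ∈ expInv k B δ
  rw [expInv, AlgHom.mem_equalizer]
  have hev : (δ (p.coeff i)).coeff 0 = p.coeff i := by
    rw [coeff_zero_eq_eval_zero]
    exact hδ.1 _
  rw [hC, hev]
  simp [CAlgHom]
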